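/- Let v : (0,∞) → [0,∞) be a decreasing function with V(x) := ∫₀^x v(z) dz finite for every x > 0. Define, for x, y > 0, G(x,y) = ∫₀^x v(z)v(y+z−x) dz if x ≤ y, and G(x,y) = ∫_{x−y}^x v(z)v(y+z−x) dz if x > y. Then for every x, r > 0 with x < r, ∫₀^r G(x,y) dy ≤ 2 V(r) V(x). -/

import Mathlib

open Real MeasureTheory

theorem stmt_6 (v : ℝ → ℝ)
    (hmono : AntitoneOn v (Set.Ioi 0))
    (hnn : ∀ z > 0, 0 ≤ v z)
    (hint : ∀ x > 0, MeasureTheory.IntegrableOn v (Set.Ioc 0 x))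
    (G : ℝ → ℝ → ℝ)
    (hG : ∀ x > 0, ∀ y > 0, G x y =
      if x ≤ y then ∫ z in Set.Ioc 0 x, v z * v (y + z - x)
      else ∫ z in Set.Ioc (x - y) x, v z * v (y + z - x))
    (x r : ℝ) (hx : 0 < x) (hxr : x < r) :
    (∫ y in Set.Ioc 0 r, G x y) ≤
      2 * (∫ z in Set.Ioc 0 r, v z) * (∫ z in Set.Ioc 0 x, v z) := by
  have hr : 0 < r := hx.trans hxr
  set Vx := ∫ z in Set.Ioc 0 x, v z with hVxdef
  set Vr := ∫ z in Set.Ioc 0 r, v z with hVrdef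
  -- basic facts about V
  have hvae : ∀ a b : ℝ, 0 ≤ a → 0 ≤ᵐ[volume.restrict (Set.Ioc a b)] v := by
    intro a b ha
    refine (ae_restrict_iff' measurableSet_Ioc).2 (Filter.Eventually.of_forall ?_)
    exact fun z hz => hnn z (lt_of_le_of_lt ha hz.1)
  have hVle : ∀ a b : ℝ, a ≤ b → 0 < b →
      (∫ z in Set.Ioc 0 a, v z) ≤ ∫ z in Set.Ioc 0 b, v z := by
    intro a b hab hb
    exact setIntegral_mono_set (hint b hb) (hvae 0 b le_rfl)
      ((Set.Ioc_subset_Ioc_right hab).eventuallyLE)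
  have hVx0 : 0 ≤ Vx := setIntegral_nonneg measurableSet_Ioc fun z hz => hnn z hz.1
  have hVxVr : Vx ≤ Vr := hVle x r hxr.le hr
  have hVrx : (∫ z in Set.Ioc 0 (r - x), v z) ≤ Vr := hVle (r - x) r (by linarith) hr
  -- interval integrability facts
  have hvi : ∀ b : ℝ, 0 < b → IntervalIntegrable v volume 0 b := fun b hb =>
    (intervalIntegrable_iff_integrableOn_Ioc_of_le hb.le).2 (hint b hb)
  -- the comparison function
  set g : ℝ → ℝ := fun y => if y ≤ x then v (x - y) else v (y - x) with hgdef
  have hI1 : IntegrableOn (fun y => v (x - y)) (Set.Ioc 0 x) := by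
    have h2 := ((hvi x hx).comp_sub_left x).symm
    simp only [sub_zero, sub_self] at h2
    exact (intervalIntegrable_iff_integrableOn_Ioc_of_le hx.le).1 h2
  have hI2 : IntegrableOn (fun y => v (y - x)) (Set.Ioc x r) := by
    have h2 := (hvi (r - x) (by linarith)).comp_sub_right x
    simp only [zero_add, sub_add_cancel] at h2
    exact (intervalIntegrable_iff_integrableOn_Ioc_of_le hxr.le).1 h2
  have hsplit : Set.Ioc 0 r = Set.Ioc 0 x ∪ Set.Ioc x r :=
    (Set.Ioc_union_Ioc_eq_Ioc hx.le hxr.le).symm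
  have hg1 : IntegrableOn g (Set.Ioc 0 x) :=
    hI1.congr_fun (fun y hy => by simp [hgdef, hy.2]) measurableSet_Ioc
  have hg2 : IntegrableOn g (Set.Ioc x r) :=
    hI2.congr_fun (fun y hy => by simp [hgdef, not_le.2 hy.1]) measurableSet_Ioc
  have hgint : IntegrableOn g (Set.Ioc 0 r) := by rw [hsplit]; exact hg1.union hg2
  -- value of ∫ g
  have hgval : (∫ y in Set.Ioc 0 r, g y) = Vx + ∫ z in Set.Ioc 0 (r - x), v z := by
    rw [hsplit, setIntegral_union (Set.Ioc_disjoint_Ioc_of_le le_rfl) measurableSet_Ioc hg1 hg2]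
    have e1 : (∫ y in Set.Ioc 0 x, g y) = Vx := by
      rw [setIntegral_congr_fun measurableSet_Ioc
        (fun y hy => by simp [hgdef, hy.2] : Set.EqOn g (fun y => v (x - y)) (Set.Ioc 0 x))]
      rw [← intervalIntegral.integral_of_le hx.le,
        intervalIntegral.integral_comp_sub_left v x, sub_self, sub_zero,
        intervalIntegral.integral_of_le hx.le]
    have e2 : (∫ y in Set.Ioc x r, g y) = ∫ z in Set.Ioc 0 (r - x), v z := by
      rw [setIntegral_congr_fun measurableSet_Ioc
        (fun y hy => by simp [hgdef, not_le.2 hy.1] : Set.EqOn g (fun y => v (y - x)) (Set.Ioc x r))]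
      rw [← intervalIntegral.integral_of_le hxr.le,
        intervalIntegral.integral_comp_sub_right v x, sub_self,
        intervalIntegral.integral_of_le (by linarith : (0:ℝ) ≤ r - x)]
    rw [e1, e2]
  -- pointwise bound
  have key : ∀ y ∈ Set.Ioc 0 r, y ≠ x → G x y ≤ Vx * g y := by
    intro y hy hyne
    rw [hG x hx y hy.1]
    by_cases hxy : x ≤ y
    · rw [if_pos hxy]
      have hxy' : x < y := lt_of_le_of_ne hxy (Ne.symm hyne)
      have hb : (∫ z in Set.Ioc 0 x, v z * v (y + z - x)) ≤
          ∫ z in Set.Ioc 0 x, v z * v (y - x) := by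
        refine integral_mono_of_nonneg ?_ ((hint x hx).mul_const _) ?_
        · refine (ae_restrict_iff' measurableSet_Ioc).2 (Filter.Eventually.of_forall ?_)
          intro z hz
          exact mul_nonneg (hnn z hz.1) (hnn _ (by linarith [hz.1]))
        · refine (ae_restrict_iff' measurableSet_Ioc).2 (Filter.Eventually.of_forall ?_)
          intro z hz
          refine mul_le_mul_of_nonneg_left ?_ (hnn z hz.1)
          exact hmono (Set.mem_Ioi.2 (by linarith)) (Set.mem_Ioi.2 (by linarith [hz.1]))
            (by linarith [hz.1])
      have : (∫ z in Set.Ioc 0 x, v z * v (y - x)) = Vx * g y := by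
        rw [integral_mul_const, hgdef]
        simp [not_le.2 hxy', hVxdef]
      linarith [hb, this ▸ hb]
    · rw [if_neg hxy]
      push_neg at hxy
      have hxy0 : 0 < x - y := by linarith
      have hb : (∫ z in Set.Ioc (x - y) x, v z * v (y + z - x)) ≤
          ∫ z in Set.Ioc (x - y) x, v (x - y) * v (z - (x - y)) := by
        have hi : IntegrableOn (fun z => v (x - y) * v (z - (x - y))) (Set.Ioc (x - y) x) := by
          have h2 := (hvi y hy.1).comp_sub_right (x - y)
          simp only [zero_add] at h2
          have h3 : y + (x - y) = x := by ring
          rw [h3] at h2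
          exact ((intervalIntegrable_iff_integrableOn_Ioc_of_le
            (by linarith [hy.1] : x - y ≤ x)).1 h2).const_mul _
        refine integral_mono_of_nonneg ?_ hi ?_
        · refine (ae_restrict_iff' measurableSet_Ioc).2 (Filter.Eventually.of_forall ?_)
          intro z hz
          exact mul_nonneg (hnn z (lt_trans hxy0 hz.1)) (hnn _ (by linarith [hz.1]))
        · refine (ae_restrict_iff' measurableSet_Ioc).2 (Filter.Eventually.of_forall ?_)
          intro z hz
          show v z * v (y + z - x) ≤ v (x - y) * v (z - (x - y))
          have h4 : y + z - x = z - (x - y) := by ring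
          rw [h4]
          refine mul_le_mul_of_nonneg_right ?_ (hnn _ (by linarith [hz.1]))
          exact hmono (Set.mem_Ioi.2 hxy0) (Set.mem_Ioi.2 (lt_trans hxy0 hz.1)) hz.1.le
      have hval : (∫ z in Set.Ioc (x - y) x, v (x - y) * v (z - (x - y))) =
          v (x - y) * ∫ z in Set.Ioc 0 y, v z := by
        rw [integral_const_mul]
        congr 1
        rw [← intervalIntegral.integral_of_le (by linarith [hy.1] : x - y ≤ x),
          intervalIntegral.integral_comp_sub_right v (x - y), sub_self]
        have : x - (x - y) = y := by ring
        rw [this, intervalIntegral.integral_of_le hy.1.le]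
      have hVy : (∫ z in Set.Ioc 0 y, v z) ≤ Vx := hVle y x hxy.le hx
      have hgy : g y = v (x - y) := by simp [hgdef, hxy.le]
      have hvxy : 0 ≤ v (x - y) := hnn _ hxy0
      calc (∫ z in Set.Ioc (x - y) x, v z * v (y + z - x))
          ≤ v (x - y) * ∫ z in Set.Ioc 0 y, v z := by rw [← hval]; exact hb
        _ ≤ v (x - y) * Vx := mul_le_mul_of_nonneg_left hVy hvxy
        _ = Vx * g y := by rw [hgy]; ring
  -- a.e. bounds on G
  have hne : ∀ᵐ y ∂(volume.restrict (Set.Ioc 0 r)), y ≠ x := by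
    refine ae_restrict_of_ae ?_
    refine (ae_iff).2 ?_
    have : {a : ℝ | ¬ a ≠ x} = {x} := by ext a; simp
    rw [this]
    exact measure_singleton x
  have hmem : ∀ᵐ y ∂(volume.restrict (Set.Ioc 0 r)), y ∈ Set.Ioc 0 r :=
    ae_restrict_mem measurableSet_Ioc
  have hGnn : 0 ≤ᵐ[volume.restrict (Set.Ioc 0 r)] G x := by
    filter_upwards [hmem] with y hy
    rw [Pi.zero_apply, hG x hx y hy.1]
    by_cases hxy : x ≤ y
    · rw [if_pos hxy]
      exact setIntegral_nonneg measurableSet_Ioc fun z hz =>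
        mul_nonneg (hnn z hz.1) (hnn _ (by linarith [hz.1]))
    · rw [if_neg hxy]
      push_neg at hxy
      exact setIntegral_nonneg measurableSet_Ioc fun z hz =>
        mul_nonneg (hnn z (by linarith [hz.1])) (hnn _ (by linarith [hz.1]))
  have hGle : G x ≤ᵐ[volume.restrict (Set.Ioc 0 r)] fun y => Vx * g y := by
    filter_upwards [hmem, hne] with y hy hyne
    exact key y hy hyne
  have hmain : (∫ y in Set.Ioc 0 r, G x y) ≤ ∫ y in Set.Ioc 0 r, Vx * g y :=
    integral_mono_of_nonneg hGnn (hgint.const_mul Vx) hGle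
  have hfin : (∫ y in Set.Ioc 0 r, Vx * g y) = Vx * (Vx + ∫ z in Set.Ioc 0 (r - x), v z) := by
    rw [integral_const_mul, hgval]
  nlinarith [hmain, hfin, hVx0, hVxVr, hVrx]
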